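/- arXiv:2601.07803 — 6 statements merged into one kernel-verified Lean document; each statement's English description precedes it below -/
import Mathlib

section
/- Let V be a ℤ₂×ℤ₂-graded vector space over a field k of characteristic ≠ 2 with a bracket [·,·] of bi-degree (0,0), and let [a,b]_s := (−1)^(γ₁·δ₂)[a,b] be the twisted bracket for a ∈ G γ, b ∈ G δ. Then for all homogeneous a₁ ∈ G γ⁽¹⁾, a₂ ∈ G γ⁽²⁾, a₃ ∈ G γ⁽³⁾ one has the identity (−1)^⟨γ⁽¹⁾,γ⁽³⁾⟩[a₁,[a₂,a₃]] + (−1)^⟨γ⁽³⁾,γ⁽²⁾⟩[a₃,[a₁,a₂]] + (−1)^⟨γ⁽²⁾,γ⁽¹⁾⟩[a₂,[a₃,a₁]] = (−1)^α · ( (−1)^(p(a₁)p(a₃))[a₁,[a₂,a₃]_s]_s + (−1)^(p(a₃)p(a₂))[a₃,[a₁,a₂]_s]_s + (−1)^(p(a₂)p(a₁))[a₂,[a₃,a₁]_s]_s ), where α = γ₁⁽¹⁾γ₂⁽²⁾ + γ₁⁽²⁾γ₂⁽³⁾ + γ₁⁽³⁾γ₂⁽¹⁾ ∈ ZMod 2.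 In particular, the bi-graded Jacobi identity for [·,·] holds on all homogeneous triples if and only if the super Jacobi identity for [·,·]_s (with signs given by total parity p) holds on all homogeneous triples. -/
/-- The sign `(−1)^⟨γ,δ⟩` where `⟨γ,δ⟩ = γ₁δ₁ + γ₂δ₂ ∈ ZMod 2`. -/
def biSign (k : Type*) [Field k] (γ δ : ZMod 2 × ZMod 2) : k :=
  (-1 : k) ^ (γ.1 * δ.1 + γ.2 * δ.2).val

/-- The super sign `(−1)^(p(γ)p(δ))` built from the total parities `p(γ)=γ₁+γ₂`. -/
def parSign (k : Type*) [Field k] (γ δ : ZMod 2 × ZMod 2) : k :=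
  (-1 : k) ^ ((γ.1 + γ.2) * (δ.1 + δ.2)).val

/-- The twisted bracket `[a,b]ₛ = (−1)^(γ₁δ₂) [a,b]` on elements of bi-degrees `γ, δ`. -/
def twBr {k V : Type*} [Field k] [AddCommGroup V] [Module k V]
    (br : V →ₗ[k] V →ₗ[k] V) (γ δ : ZMod 2 × ZMod 2) (a b : V) : V :=
  ((-1 : k) ^ (γ.1 * δ.2).val) • br a b

lemma negOnePow_val_add (k : Type*) [Field k] (x y : ZMod 2) :
    (-1 : k) ^ (x + y).val = (-1 : k) ^ x.val * (-1 : k) ^ y.val := by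
  rw [ZMod.val_add, ← pow_add, ← Nat.mod_add_div (x.val + y.val) 2, pow_add, pow_mul, neg_one_sq, one_pow, mul_one, Nat.mod_add_div]

lemma neg_one_pow_natCast_eq {k : Type*} [Field k] {m n : ℕ} (h : (m : ZMod 2) = n) :
    (-1 : k) ^ m = (-1 : k) ^ n := by
  have h2 : m % 2 = n % 2 := by rwa [ZMod.natCast_eq_natCast_iff, Nat.ModEq] at h
  conv_lhs => rw [← Nat.div_add_mod m 2]
  conv_rhs => rw [← Nat.div_add_mod n 2]
  rw [pow_add, pow_add, pow_mul, pow_mul, neg_one_sq, one_pow, one_pow, h2]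

lemma keyid {k V : Type*} [Field k] [AddCommGroup V] [Module k V]
    (br : V →ₗ[k] V →ₗ[k] V) (γ₁ γ₂ γ₃ : ZMod 2 × ZMod 2) (a₁ a₂ a₃ : V) :
    biSign k γ₁ γ₃ • br a₁ (br a₂ a₃) + biSign k γ₃ γ₂ • br a₃ (br a₁ a₂)
        + biSign k γ₂ γ₁ • br a₂ (br a₃ a₁)
      = ((-1 : k) ^ (γ₁.1 * γ₂.2 + γ₂.1 * γ₃.2 + γ₃.1 * γ₁.2).val) •
          (parSign k γ₁ γ₃ • twBr br γ₁ (γ₂ + γ₃) a₁ (twBr br γ₂ γ₃ a₂ a₃)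
            + parSign k γ₃ γ₂ • twBr br γ₃ (γ₁ + γ₂) a₃ (twBr br γ₁ γ₂ a₁ a₂)
            + parSign k γ₂ γ₁ • twBr br γ₂ (γ₃ + γ₁) a₂ (twBr br γ₃ γ₁ a₃ a₁)) := by
  simp only [twBr, map_smul, smul_smul, smul_add, biSign, parSign,
    ← negOnePow_val_add, ← pow_add]
  congr 1
  · congr 1
    · congr 1
      apply neg_one_pow_natCast_eq
      push_cast [ZMod.natCast_val, ZMod.cast_id]
      revert γ₁ γ₂ γ₃; decide
    · congr 1
      apply neg_one_pow_natCast_eq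
      push_cast [ZMod.natCast_val, ZMod.cast_id]
      revert γ₁ γ₂ γ₃; decide
  · congr 1
    apply neg_one_pow_natCast_eq
    push_cast [ZMod.natCast_val, ZMod.cast_id]
    revert γ₁ γ₂ γ₃; decide


/-- The cyclic bi-graded Jacobi expression of `[·,·]` equals, up to the sign
`(−1)^α` with `α = γ₁⁽¹⁾γ₂⁽²⁾ + γ₁⁽²⁾γ₂⁽³⁾ + γ₁⁽³⁾γ₂⁽¹⁾`, the cyclic super Jacobi
expression of the twisted bracket `[·,·]ₛ`; in particular the bi-graded Jacobi identity
holds on all homogeneous triples iff the super Jacobi identity for `[·,·]ₛ` does. -/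
theorem bigraded_jacobi_vs_super_jacobi {k V : Type*} [Field k] [AddCommGroup V] [Module k V]
    (hchar : (2 : k) ≠ 0)
    (G : ZMod 2 × ZMod 2 → Submodule k V)
    (hG : DirectSum.IsInternal G)
    (br : V →ₗ[k] V →ₗ[k] V)
    (hdeg : ∀ (γ δ : ZMod 2 × ZMod 2), ∀ a ∈ G γ, ∀ b ∈ G δ, br a b ∈ G (γ + δ)) :
    (∀ (γ₁ γ₂ γ₃ : ZMod 2 × ZMod 2), ∀ a₁ ∈ G γ₁, ∀ a₂ ∈ G γ₂, ∀ a₃ ∈ G γ₃,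
        biSign k γ₁ γ₃ • br a₁ (br a₂ a₃) + biSign k γ₃ γ₂ • br a₃ (br a₁ a₂)
            + biSign k γ₂ γ₁ • br a₂ (br a₃ a₁)
          = ((-1 : k) ^ (γ₁.1 * γ₂.2 + γ₂.1 * γ₃.2 + γ₃.1 * γ₁.2).val) •
              (parSign k γ₁ γ₃ • twBr br γ₁ (γ₂ + γ₃) a₁ (twBr br γ₂ γ₃ a₂ a₃)
                + parSign k γ₃ γ₂ • twBr br γ₃ (γ₁ + γ₂) a₃ (twBr br γ₁ γ₂ a₁ a₂)
                + parSign k γ₂ γ₁ • twBr br γ₂ (γ₃ + γ₁) a₂ (twBr br γ₃ γ₁ a₃ a₁))) ∧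
    ((∀ (γ δ ρ : ZMod 2 × ZMod 2), ∀ a ∈ G γ, ∀ b ∈ G δ, ∀ c ∈ G ρ,
        biSign k γ ρ • br a (br b c) + biSign k ρ δ • br c (br a b)
          + biSign k δ γ • br b (br c a) = 0) ↔
      (∀ (γ δ ρ : ZMod 2 × ZMod 2), ∀ a ∈ G γ, ∀ b ∈ G δ, ∀ c ∈ G ρ,
        parSign k γ ρ • twBr br γ (δ + ρ) a (twBr br δ ρ b c)
          + parSign k ρ δ • twBr br ρ (γ + δ) c (twBr br γ δ a b)
          + parSign k δ γ • twBr br δ (ρ + γ) b (twBr br ρ γ c a) = 0)) := by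
  refine ⟨fun γ₁ γ₂ γ₃ a₁ _ a₂ _ a₃ _ => keyid br γ₁ γ₂ γ₃ a₁ a₂ a₃, ?_⟩
  constructor
  · intro h γ δ ρ a ha b hb c hc
    have h2 := keyid br γ δ ρ a b c
    rw [h γ δ ρ a ha b hb c hc] at h2
    have hne : ((-1 : k) ^ (γ.1 * δ.2 + δ.1 * ρ.2 + ρ.1 * γ.2).val) ≠ 0 :=
      pow_ne_zero _ (neg_ne_zero.mpr one_ne_zero)
    rcases smul_eq_zero.mp h2.symm with h3 | h3
    · exact absurd h3 hne
    · exact h3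
  · intro h γ δ ρ a ha b hb c hc
    rw [keyid br γ δ ρ a b c, h γ δ ρ a ha b hb c hc, smul_zero]
end

section
/- Let V be a ℤ₂×ℤ₂-graded vector space over a field k of characteristic ≠ 2 with a bracket [·,·] of bi-degree (0,0), and let [a,b]_s := (−1)^(γ₁·δ₂)[a,b] be the twisted bracket for a ∈ G γ, b ∈ G δ. Then [·,·] satisfies bi-graded antisymmetry ([a,b] = −(−1)^⟨γ,δ⟩[b,a] for all homogeneous a,b) if and only if [·,·]_s satisfies super antisymmetry with respect to total parity ([a,b]_s = −(−1)^(p(a)p(b))[b,a]_s for all homogeneous a,b). -/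
lemma signKey {k : Type*} [Field k] (γ δ : ZMod 2 × ZMod 2) :
    parSign k γ δ * ((-1 : k) ^ (δ.1 * γ.2).val) =
    ((-1 : k) ^ (γ.1 * δ.2).val) * biSign k γ δ := by
  obtain ⟨g1, g2⟩ := γ; obtain ⟨d1, d2⟩ := δ
  fin_cases g1 <;> fin_cases g2 <;> fin_cases d1 <;> fin_cases d2 <;>
    simp +decide [parSign, biSign]

lemma signSq {k : Type*} [Field k] (x : ZMod 2) :
    (-1 : k) ^ x.val * (-1 : k) ^ x.val = 1 := by
  fin_cases x <;> simp +decide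

/-- A bracket of bi-degree `(0,0)` is bi-graded antisymmetric iff its twisted
bracket is super antisymmetric with respect to total parity. -/
theorem bigraded_antisymm_iff_super_antisymm {k V : Type*} [Field k]
    [AddCommGroup V] [Module k V]
    (hchar : (2 : k) ≠ 0)
    (G : ZMod 2 × ZMod 2 → Submodule k V)
    (hG : DirectSum.IsInternal G)
    (br : V →ₗ[k] V →ₗ[k] V)
    (hdeg : ∀ (γ δ : ZMod 2 × ZMod 2), ∀ a ∈ G γ, ∀ b ∈ G δ, br a b ∈ G (γ + δ)) :
    (∀ (γ δ : ZMod 2 × ZMod 2), ∀ a ∈ G γ, ∀ b ∈ G δ,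
        br a b = -(biSign k γ δ • br b a)) ↔
    (∀ (γ δ : ZMod 2 × ZMod 2), ∀ a ∈ G γ, ∀ b ∈ G δ,
        twBr br γ δ a b = -(parSign k γ δ • twBr br δ γ b a)) := by
  constructor
  · intro h γ δ a ha b hb
    have := h γ δ a ha b hb
    unfold twBr
    rw [this, smul_neg, smul_smul, smul_smul, signKey]
  · intro h γ δ a ha b hb
    have key := h γ δ a ha b hb
    unfold twBr at key
    set s : k := (-1 : k) ^ (γ.1 * δ.2).val with hs
    have : s • (s • br a b) = s • -(parSign k γ δ • (-1 : k) ^ (δ.1 * γ.2).val • br b a) := by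
      rw [key]
    rw [smul_smul, signSq, one_smul, smul_neg, smul_smul, smul_smul] at this
    rw [this, mul_assoc, signKey, ← mul_assoc, ← hs, signSq, one_mul]
end

section
/- Let L be a Lie algebra over a field k of characteristic ≠ 2 and let σ : L → L be a Lie algebra automorphism with σ ∘ σ = id. Define a new bilinear bracket by ⁅x,y⁆' := (1/2)·(⁅x,y⁆ + ⁅σ(x),y⁆ + ⁅x,σ(y)⁆ − ⁅σ(x),σ(y)⁆). Then ⁅·,·⁆' is antisymmetric and satisfies the Jacobi identity, hence defines a Lie algebra structure on the underlying vector space of L. Moreover ⁅x,y⁆' = ⁅x,y⁆ whenever σ(x) = x, and ⁅x,y⁆' = −⁅x,y⁆ whenever σ(x) = −x and σ(y) = −y. -/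
/-- The deformed bracket
`⁅x,y⁆' = (1/2)(⁅x,y⁆ + ⁅σx,y⁆ + ⁅x,σy⁆ − ⁅σx,σy⁆)` associated to a map `σ`. -/
def twistBracket (k : Type*) {L : Type*} [Field k] [LieRing L] [LieAlgebra k L]
    (σ : L → L) (x y : L) : L :=
  (2 : k)⁻¹ • (⁅x, y⁆ + ⁅σ x, y⁆ + ⁅x, σ y⁆ - ⁅σ x, σ y⁆)

/-- For an involutive automorphism `σ` of a Lie algebra over a field of
characteristic `≠ 2`, the deformed bracket is antisymmetric and satisfies the
Jacobi identity (hence defines a Lie algebra structure on the same space);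
it agrees with the original bracket when `σ x = x`, and equals its negative
when both arguments are in the `(−1)`-eigenspace of `σ`. -/
theorem twistBracket_lie_algebra {k L : Type*} [Field k] [LieRing L] [LieAlgebra k L]
    (hchar : (2 : k) ≠ 0)
    (σ : L ≃ₗ⁅k⁆ L) (hσ : ∀ x, σ (σ x) = x) :
    (∀ x y : L, twistBracket k (⇑σ) x y = -twistBracket k (⇑σ) y x) ∧
    (∀ x y z : L,
        twistBracket k (⇑σ) x (twistBracket k (⇑σ) y z)
          + twistBracket k (⇑σ) z (twistBracket k (⇑σ) x y)
          + twistBracket k (⇑σ) y (twistBracket k (⇑σ) z x) = 0) ∧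
    (∀ x y : L, σ x = x → twistBracket k (⇑σ) x y = ⁅x, y⁆) ∧
    (∀ x y : L, σ x = -x → σ y = -y → twistBracket k (⇑σ) x y = -⁅x, y⁆) := by
  have h2 : (2:k)⁻¹ + (2:k)⁻¹ = 1 := by field_simp; ring
  have hsub : ∀ a b : L, σ (a - b) = σ a - σ b := fun a b => σ.toLinearEquiv.map_sub a b
  have hsmul : ∀ (c : k) (a : L), σ (c • a) = c • σ a := fun c a => σ.toLinearEquiv.map_smul c a
  -- key reformulation of the bracket
  have hL1 : ∀ a b : L, twistBracket k (⇑σ) a b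
      = ⁅a, b⁆ - (2:k)⁻¹ • ⁅a - σ a, b - σ b⁆ := by
    intro a b
    simp only [twistBracket, lie_sub, sub_lie]
    match_scalars <;> (field_simp; try ring)
  refine ⟨?_, ?_, ?_, ?_⟩
  · intro x y
    simp only [twistBracket, ← smul_neg]
    congr 1
    rw [← lie_skew x y, ← lie_skew (σ x) y, ← lie_skew x (σ y), ← lie_skew (σ x) (σ y)]
    abel
  · intro x y z
    -- σ negates q a := a - σ a
    have hq : ∀ a : L, σ (a - σ a) = -(a - σ a) := by
      intro a; rw [hsub, hσ]; abel
    -- q of the twisted bracket equals q of the original bracket, in expanded form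
    have hqB : ∀ a b : L, twistBracket k (⇑σ) a b - σ (twistBracket k (⇑σ) a b)
        = ⁅a, b - σ b⁆ + ⁅a - σ a, b⁆ - ⁅a - σ a, b - σ b⁆ := by
      intro a b
      rw [hL1, hsub, hsmul]
      simp only [σ.map_lie, hsub, hσ, lie_sub, sub_lie]
      module
    have hterm : ∀ a b c : L,
        twistBracket k (⇑σ) a (twistBracket k (⇑σ) b c)
          = ⁅a, ⁅b, c⁆⁆ - (2:k)⁻¹ •
            (⁅a, ⁅b - σ b, c - σ c⁆⁆ + ⁅a - σ a, ⁅b, c - σ c⁆⁆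
              + ⁅a - σ a, ⁅b - σ b, c⁆⁆ - ⁅a - σ a, ⁅b - σ b, c - σ c⁆⁆) := by
      intro a b c
      have h1 : (⁅a - σ a, twistBracket k (⇑σ) b c - σ (twistBracket k (⇑σ) b c)⁆ : L)
          = ⁅a - σ a, ⁅b, c - σ c⁆⁆ + ⁅a - σ a, ⁅b - σ b, c⁆⁆
            - ⁅a - σ a, ⁅b - σ b, c - σ c⁆⁆ := by
        rw [hqB]; simp only [lie_add, lie_sub]
      have h3 : (⁅a, twistBracket k (⇑σ) b c⁆ : L)
          = ⁅a, ⁅b, c⁆⁆ - (2:k)⁻¹ • ⁅a, ⁅b - σ b, c - σ c⁆⁆ := by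
        rw [hL1 b c]; simp [lie_sub, lie_smul]
      rw [hL1 a (twistBracket k (⇑σ) b c), h3, h1]
      module
    rw [hterm x y z, hterm z x y, hterm y z x]
    set u := x - σ x with hu
    set v := y - σ y with hv
    set w := z - σ z with hw
    have J0 := lie_jacobi x y z
    have J1 := lie_jacobi x v w
    have J2 := lie_jacobi u y w
    have J3 := lie_jacobi u v z
    have J4 := lie_jacobi u v w
    calc (⁅x, ⁅y, z⁆⁆ - (2:k)⁻¹ • (⁅x, ⁅v, w⁆⁆ + ⁅u, ⁅y, w⁆⁆ + ⁅u, ⁅v, z⁆⁆ - ⁅u, ⁅v, w⁆⁆))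
          + (⁅z, ⁅x, y⁆⁆ - (2:k)⁻¹ • (⁅z, ⁅u, v⁆⁆ + ⁅w, ⁅x, v⁆⁆ + ⁅w, ⁅u, y⁆⁆ - ⁅w, ⁅u, v⁆⁆))
          + (⁅y, ⁅z, x⁆⁆ - (2:k)⁻¹ • (⁅y, ⁅w, u⁆⁆ + ⁅v, ⁅z, u⁆⁆ + ⁅v, ⁅w, x⁆⁆ - ⁅v, ⁅w, u⁆⁆))
        = (⁅x, ⁅y, z⁆⁆ + ⁅y, ⁅z, x⁆⁆ + ⁅z, ⁅x, y⁆⁆)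
          - (2:k)⁻¹ • ((⁅x, ⁅v, w⁆⁆ + ⁅v, ⁅w, x⁆⁆ + ⁅w, ⁅x, v⁆⁆)
            + (⁅u, ⁅y, w⁆⁆ + ⁅y, ⁅w, u⁆⁆ + ⁅w, ⁅u, y⁆⁆)
            + (⁅u, ⁅v, z⁆⁆ + ⁅v, ⁅z, u⁆⁆ + ⁅z, ⁅u, v⁆⁆)
            - (⁅u, ⁅v, w⁆⁆ + ⁅v, ⁅w, u⁆⁆ + ⁅w, ⁅u, v⁆⁆)) := by module
      _ = 0 := by rw [J1, J2, J3, J4, J0]; simp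
  · intro x y hx
    simp only [twistBracket, hx]
    have h : (⁅x, y⁆ : L) + ⁅x, y⁆ + ⁅x, σ y⁆ - ⁅x, σ y⁆ = ⁅x, y⁆ + ⁅x, y⁆ := by abel
    rw [h, smul_add, ← add_smul, h2, one_smul]
  · intro x y hx hy
    simp only [twistBracket, hx, hy, neg_lie, lie_neg, neg_neg]
    have h : (⁅x, y⁆ : L) + -⁅x, y⁆ + -⁅x, y⁆ - ⁅x, y⁆ = -⁅x, y⁆ + -⁅x, y⁆ := by abel
    rw [h, smul_add, ← add_smul, h2]
    simp
end

section
/- Equip ℝ³ (with standard basis e₁, e₂, e₃) with the bilinear bracket determined by ⁅e₁,e₂⁆ = e₃, ⁅e₂,e₃⁆ = −e₁, ⁅e₃,e₁⁆ = e₂ and antisymmetry, i.e. ⁅x,y⁆ = (−(x₂y₃ − x₃y₂), x₃y₁ − x₁y₃, x₁y₂ − x₂y₁). Then this bracket satisfies the Jacobi identity, making ℝ³ a real Lie algebra, and this Lie algebra is isomorphic (as a Lie algebra over ℝ) to so(1,2) := { X : Matrix (Fin 3) (Fin 3) ℝ | Xᵀ * η + η * X = 0 }, where η = diagonal (1, −1,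 −1), with the commutator bracket ⁅X,Y⁆ = XY − YX. -/
open Matrix

/-- The twisted cross-product bracket on `ℝ³`:
`⁅x,y⁆ = (−(x₂y₃ − x₃y₂), x₃y₁ − x₁y₃, x₁y₂ − x₂y₁)` (1-based indexing). -/
def br3 (x y : Fin 3 → ℝ) : Fin 3 → ℝ :=
  ![-(x 1 * y 2 - x 2 * y 1), x 2 * y 0 - x 0 * y 2, x 0 * y 1 - x 1 * y 0]

/-- The metric `η = diag(1,−1,−1)`. -/
def eta12 : Matrix (Fin 3) (Fin 3) ℝ := Matrix.diagonal ![1, -1, -1]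

/-- The embedding of `ℝ³` into `so(1,2)`. -/
def phi3 : (Fin 3 → ℝ) →ₗ[ℝ] Matrix (Fin 3) (Fin 3) ℝ where
  toFun x := Matrix.of ![![0, x 1, x 2], ![x 1, 0, -x 0], ![x 2, x 0, 0]]
  map_add' x y := by
    funext i j
    fin_cases i <;> fin_cases j <;> simp <;> ring
  map_smul' c x := by
    funext i j
    fin_cases i <;> fin_cases j <;> simp <;> ring

theorem phi3_apply (x : Fin 3 → ℝ) :
    phi3 x = Matrix.of ![![0, x 1, x 2], ![x 1, 0, -x 0], ![x 2, x 0, 0]] := rfl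

/-- The twisted bracket `br3` on `ℝ³` satisfies the Jacobi identity (so it makes `ℝ³`
a real Lie algebra), and the resulting Lie algebra is isomorphic to
`so(1,2) = {X | Xᵀη + ηX = 0}` with the commutator bracket: there is an injective
linear map `φ` from `ℝ³` onto `so(1,2)` intertwining `br3` with the commutator. -/
theorem twisted_so3_jacobi_and_iso_so12 :
    (∀ x y z : Fin 3 → ℝ, br3 x (br3 y z) + br3 z (br3 x y) + br3 y (br3 z x) = 0) ∧
    ∃ φ : (Fin 3 → ℝ) →ₗ[ℝ] Matrix (Fin 3) (Fin 3) ℝ,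
      Function.Injective φ ∧
      (∀ x : Fin 3 → ℝ, (φ x)ᵀ * eta12 + eta12 * φ x = 0) ∧
      (∀ X : Matrix (Fin 3) (Fin 3) ℝ, Xᵀ * eta12 + eta12 * X = 0 → ∃ x, φ x = X) ∧
      (∀ x y : Fin 3 → ℝ, φ (br3 x y) = φ x * φ y - φ y * φ x) := by
  constructor
  · intro x y z
    funext i
    fin_cases i <;> simp [br3] <;> ring
  · refine ⟨phi3, ?_, ?_, ?_, ?_⟩
    · intro x y h
      funext i
      fin_cases i
      · have := congrFun (congrFun h 2) 1
        simpa [phi3_apply] using this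
      · have := congrFun (congrFun h 0) 1
        simpa [phi3_apply] using this
      · have := congrFun (congrFun h 0) 2
        simpa [phi3_apply] using this
    · intro x
      funext i j
      fin_cases i <;> fin_cases j <;>
        simp [phi3_apply, eta12, Matrix.mul_apply, Fin.sum_univ_three, Matrix.diagonal,
          Matrix.transpose_apply, Matrix.vecHead, Matrix.vecTail]
    · intro X hX
      refine ⟨![X 2 1, X 0 1, X 0 2], ?_⟩
      have h := fun i j => congrFun (congrFun hX i) j
      have h00 := h 0 0; have h11 := h 1 1; have h22 := h 2 2
      have h01 := h 0 1; have h02 := h 0 2; have h12 := h 1 2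
      have h10 := h 1 0; have h20 := h 2 0; have h21 := h 2 1
      simp [eta12, Matrix.mul_apply, Fin.sum_univ_three, Matrix.diagonal,
        Matrix.transpose_apply] at h00 h11 h22 h01 h02 h12 h10 h20 h21
      funext i j
      fin_cases i <;> fin_cases j <;> simp [phi3_apply] <;> linarith
    · intro x y
      funext i j
      fin_cases i <;> fin_cases j <;>
        simp [phi3_apply, br3, Matrix.mul_apply, Fin.sum_univ_three] <;> ring
end

section
/- Let C^∞(ℝ,ℝ) be the ℝ-algebra of smooth functions ℝ → ℝ (pointwise operations). Then every ℝ-algebra homomorphism φ : C^∞(ℝ,ℝ) → ℂ takes only real values: for every smooth f, the imaginary part of φ(f) is zero. In particular there is no surjective ℝ-algebra homomorphism from C^∞(ℝ,ℝ) onto ℂ. -/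
/-- The `ℝ`-algebra `C^∞(ℝ,ℝ)` of smooth real functions, as a subalgebra of `ℝ → ℝ`. -/
def SmoothR : Subalgebra ℝ (ℝ → ℝ) where
  carrier := {f | ContDiff ℝ (⊤ : ℕ∞) f}
  mul_mem' := by
    intro f g hf hg
    rw [Set.mem_setOf_eq] at hf hg ⊢
    exact hf.mul hg
  one_mem' := by
    rw [Set.mem_setOf_eq]
    exact contDiff_const
  add_mem' := by
    intro f g hf hg
    rw [Set.mem_setOf_eq] at hf hg ⊢
    exact hf.add hg
  zero_mem' := by
    rw [Set.mem_setOf_eq]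
    exact contDiff_const
  algebraMap_mem' := by
    intro c
    rw [Set.mem_setOf_eq]
    exact contDiff_const

/-- Every `ℝ`-algebra homomorphism `C^∞(ℝ,ℝ) → ℂ` takes only real values; in
particular there is no surjective `ℝ`-algebra homomorphism `C^∞(ℝ,ℝ) → ℂ`. -/
theorem algHom_smooth_to_complex_real_valued :
    (∀ φ : SmoothR →ₐ[ℝ] ℂ, ∀ f : SmoothR, (φ f).im = 0) ∧
    ¬∃ φ : SmoothR →ₐ[ℝ] ℂ, Function.Surjective φ := by
  have key : ∀ φ : SmoothR →ₐ[ℝ] ℂ, ∀ f : SmoothR, (φ f).im = 0 := by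
    intro φ f
    by_contra hb
    set a : ℝ := (φ f).re with ha
    set b : ℝ := (φ f).im with hbdef
    have hfsm : ContDiff ℝ (⊤ : ℕ∞) (f : ℝ → ℝ) := f.2
    have hden : ∀ x : ℝ, ((f : ℝ → ℝ) x - a) ^ 2 + b ^ 2 ≠ 0 := by
      intro x
      positivity
    have hg : ContDiff ℝ (⊤ : ℕ∞) (fun x => ((f : ℝ → ℝ) x - a) ^ 2 + b ^ 2) :=
      ((hfsm.sub contDiff_const).pow 2).add contDiff_const
    have hginv : ContDiff ℝ (⊤ : ℕ∞)
        (fun x => (((f : ℝ → ℝ) x - a) ^ 2 + b ^ 2)⁻¹) := hg.inv hden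
    set g : SmoothR := ⟨fun x => ((f : ℝ → ℝ) x - a) ^ 2 + b ^ 2, hg⟩ with hgdef
    set ginv : SmoothR := ⟨_, hginv⟩ with hginvdef
    have hmul : g * ginv = 1 := by
      apply Subtype.ext
      funext x
      exact mul_inv_cancel₀ (hden x)
    have hgeq : g = (f - algebraMap ℝ SmoothR a) ^ 2 + algebraMap ℝ SmoothR (b ^ 2) := by
      apply Subtype.ext
      funext x
      rfl
    have hφg : φ g = 0 := by
      rw [hgeq, map_add, map_pow, map_sub, φ.commutes, φ.commutes]
      apply Complex.ext <;>
        simp [Complex.sub_re, Complex.sub_im, Complex.ofReal_re, Complex.ofReal_im,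
          sq, Complex.mul_re, Complex.mul_im, ← ha, ← hbdef]
    have h1 : (1 : ℂ) = 0 := by
      have := map_mul φ g ginv
      rw [hmul, map_one, hφg, zero_mul] at this
      exact this
    exact one_ne_zero h1
  refine ⟨key, ?_⟩
  rintro ⟨φ, hsurj⟩
  obtain ⟨f, hf⟩ := hsurj Complex.I
  have := key φ f
  rw [hf] at this
  simp at this
end

section
/- Let C^∞(ℝ,ℝ) be the ℝ-algebra of smooth functions ℝ → ℝ and let A be the ℝ-algebra of smooth functions g : ℝ → ℂ with g(−x) = conj(g(x)) for all x (both with pointwise operations). Then there is no ℝ-algebra isomorphism between A and C^∞(ℝ,ℝ). -/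
/-- The `ℝ`-algebra `A` of smooth functions `g : ℝ → ℂ` with `g(−x) = conj (g x)`,
as a subalgebra of `ℝ → ℂ`. -/
def ConjSymm : Subalgebra ℝ (ℝ → ℂ) where
  carrier := {g | ContDiff ℝ (⊤ : ℕ∞) g ∧ ∀ x : ℝ, g (-x) = starRingEnd ℂ (g x)}
  mul_mem' := by
    intro f g hf hg
    rw [Set.mem_setOf_eq] at hf hg ⊢
    exact ⟨hf.1.mul hg.1, fun x => by
      simp only [Pi.mul_apply, hf.2 x, hg.2 x, map_mul]⟩
  one_mem' := by
    rw [Set.mem_setOf_eq]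
    exact ⟨contDiff_const, fun x => by simp⟩
  add_mem' := by
    intro f g hf hg
    rw [Set.mem_setOf_eq] at hf hg ⊢
    exact ⟨hf.1.add hg.1, fun x => by
      simp only [Pi.add_apply, hf.2 x, hg.2 x, map_add]⟩
  zero_mem' := by
    rw [Set.mem_setOf_eq]
    exact ⟨contDiff_const, fun x => by simp⟩
  algebraMap_mem' := by
    intro c
    rw [Set.mem_setOf_eq]
    refine ⟨contDiff_const, fun x => ?_⟩
    simp [Algebra.algebraMap_eq_smul_one]

set_option synthInstance.maxHeartbeats 1000000 in
set_option maxHeartbeats 1000000 in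
/-- There is no `ℝ`-algebra isomorphism between `A` and `C^∞(ℝ,ℝ)`. -/
theorem no_algEquiv_ConjSymm_SmoothR : IsEmpty (ConjSymm ≃ₐ[ℝ] SmoothR) := by
  constructor
  intro iso
  have hg : (fun x : ℝ => (x : ℂ) * Complex.I) ∈ ConjSymm := by
    refine ⟨(Complex.ofRealCLM.contDiff).mul contDiff_const, fun x => ?_⟩
    simp [Complex.ext_iff]
  set g : ConjSymm := ⟨_, hg⟩ with hgdef
  set f := iso g with hfdef
  have hfsmooth : ContDiff ℝ (⊤ : ℕ∞) (f : ℝ → ℝ) := f.2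
  have hfval : ∀ x : ℝ, ((f : ℝ → ℝ) x)^2 + 1 ≠ 0 := fun x => by positivity
  have hinv : (fun x => (((f : ℝ → ℝ) x)^2 + 1)⁻¹) ∈ SmoothR := by
    exact ((hfsmooth.pow 2).add contDiff_const).inv hfval
  have hunit : IsUnit (f^2 + 1 : SmoothR) := by
    refine IsUnit.of_mul_eq_one ⟨_, hinv⟩ ?_
    ext x
    show (((f : ℝ → ℝ) x)^2 + 1) * (((f : ℝ → ℝ) x)^2 + 1)⁻¹ = 1
    exact mul_inv_cancel₀ (hfval x)
  have hunit' : IsUnit (g^2 + 1 : ConjSymm) := by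
    have h := hunit.map iso.symm.toAlgHom
    have heq : iso.symm.toAlgHom (f^2 + 1) = g^2 + 1 := by
      rw [map_add, map_pow, map_one, hfdef]
      simp
    rwa [heq] at h
  obtain ⟨u, hu⟩ := hunit'
  have key := congrArg (fun h : ConjSymm => (h : ℝ → ℂ) 1) u.mul_inv
  rw [hu] at key
  have h0 : ((g^2 + 1 : ConjSymm) : ℝ → ℂ) 1 = 0 := by
    have : ((g^2 + 1 : ConjSymm) : ℝ → ℂ) 1 = ((g : ℝ → ℂ) 1)^2 + 1 := by
      push_cast
      simp
    rw [this, hgdef]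
    simp [Complex.I_sq]
  rw [show (((g^2+1) * ↑u⁻¹ : ConjSymm) : ℝ → ℂ) 1 = ((g^2+1 : ConjSymm) : ℝ → ℂ) 1 * ((↑u⁻¹ : ConjSymm) : ℝ → ℂ) 1 from rfl, h0, zero_mul] at key
  exact zero_ne_one key
end
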